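/- Let θν = J Σ^{1/2} γ with J ∈ ℝ^{3×n}, Σ ∈ 𝕊ⁿ₊, γ in the closed unit ball of ℝⁿ, ν a unit vector, and θ ≥ 0. Then for any γ_shp ∈ ℝ³, ‖exp([θν]×)γ_shp − γ_shp‖₂ ≤ √(λ_max(J Σ Jᵀ)) · ‖γ_shp‖₂. -/

import Mathlib

open Matrix

noncomputable def eunorm {n : ℕ} (v : Fin n → ℝ) : ℝ := Real.sqrt (∑ i, v i ^ 2)

section PSDSqrt

open scoped ComplexOrder

/-- The square root of a positive semidefinite matrix, as `Matrix.PosSemidef.sqrt` was defined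
in Mathlib (Dec 2024); that definition has since been removed. -/
noncomputable def Matrix.PosSemidef.sqrt {n : Type*} [Fintype n] [DecidableEq n] {𝕜 : Type*}
    [RCLike 𝕜] {A : Matrix n n 𝕜} (hA : A.PosSemidef) : Matrix n n 𝕜 :=
  hA.1.eigenvectorUnitary.1 * diagonal ((↑) ∘ (√·) ∘ hA.1.eigenvalues) *
  (star hA.1.eigenvectorUnitary : Matrix n n 𝕜)

end PSDSqrt

def skew (ν : Fin 3 → ℝ) : Matrix (Fin 3) (Fin 3) ℝ :=
  !![0, -ν 2, ν 1; ν 2, 0, -ν 0; -ν 1, ν 0, 0]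

lemma dot_self_nonneg' {n : ℕ} (v : Fin n → ℝ) : 0 ≤ v ⬝ᵥ v :=
  Finset.sum_nonneg fun _ _ => mul_self_nonneg _

lemma eunorm_eq_sqrt_dot {n : ℕ} (v : Fin n → ℝ) : eunorm v = Real.sqrt (v ⬝ᵥ v) := by
  simp [eunorm, dotProduct, pow_two]

lemma eunorm_nonneg {n : ℕ} (v : Fin n → ℝ) : 0 ≤ eunorm v := Real.sqrt_nonneg _

lemma eunorm_sq {n : ℕ} (v : Fin n → ℝ) : eunorm v ^ 2 = v ⬝ᵥ v := by
  rw [eunorm_eq_sqrt_dot, Real.sq_sqrt (dot_self_nonneg' v)]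

lemma dot_le_eunorm_mul {n : ℕ} (u v : Fin n → ℝ) : u ⬝ᵥ v ≤ eunorm u * eunorm v := by
  have h := Finset.sum_mul_sq_le_sq_mul_sq Finset.univ u v
  calc u ⬝ᵥ v ≤ |u ⬝ᵥ v| := le_abs_self _
    _ = Real.sqrt ((u ⬝ᵥ v) ^ 2) := (Real.sqrt_sq_eq_abs _).symm
    _ ≤ Real.sqrt ((∑ i, u i ^ 2) * ∑ i, v i ^ 2) := by
        apply Real.sqrt_le_sqrt
        simpa [dotProduct, pow_two] using h
    _ = eunorm u * eunorm v := by
        rw [Real.sqrt_mul (Finset.sum_nonneg fun _ _ => sq_nonneg _), eunorm, eunorm]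

lemma eunorm_withLp {n : ℕ} (v : Fin n → ℝ) :
    ‖(WithLp.equiv 2 (Fin n → ℝ)).symm v‖ = eunorm v := by
  rw [EuclideanSpace.norm_eq, eunorm]
  congr 1
  refine Finset.sum_congr rfl fun i _ => ?_
  rw [Real.norm_eq_abs, sq_abs]
  rfl

lemma psd_sqrt_conjTranspose {n : ℕ} {S : Matrix (Fin n) (Fin n) ℝ} (hS : S.PosSemidef) :
    hS.sqrtᴴ = hS.sqrt := by
  simp [Matrix.PosSemidef.sqrt, Matrix.conjTranspose_mul, Matrix.mul_assoc, Matrix.star_eq_conjTranspose]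

lemma psd_sqrt_mul_self {n : ℕ} {S : Matrix (Fin n) (Fin n) ℝ} (hS : S.PosSemidef) :
    hS.sqrt * hS.sqrt = S := by
  have hU : (star hS.1.eigenvectorUnitary : Matrix (Fin n) (Fin n) ℝ) *
      (hS.1.eigenvectorUnitary : Matrix (Fin n) (Fin n) ℝ) = 1 := Unitary.coe_star_mul_self _
  unfold Matrix.PosSemidef.sqrt
  rw [show ∀ A B C : Matrix (Fin n) (Fin n) ℝ, A * B * C * (A * B * C) = A * (B * (C * A) * B) * C
    from fun A B C => by simp only [Matrix.mul_assoc]]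
  rw [hU, Matrix.mul_one, Matrix.diagonal_mul_diagonal]
  conv_rhs => rw [hS.1.spectral_theorem, Unitary.conjStarAlgAut_apply]
  congr 3
  ext i
  simp [Real.mul_self_sqrt (hS.eigenvalues_nonneg i)]

lemma skew_transpose (ν : Fin 3 → ℝ) : (skew ν)ᵀ = -(skew ν) := by
  ext i j
  fin_cases i <;> fin_cases j <;> simp [skew]

lemma skew_mulVec_dot (ν y : Fin 3 → ℝ) :
    (skew ν *ᵥ y) ⬝ᵥ (skew ν *ᵥ y) ≤ (ν ⬝ᵥ ν) * (y ⬝ᵥ y) := by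
  simp [skew, Matrix.mulVec, dotProduct, Fin.sum_univ_three]
  nlinarith [sq_nonneg (ν 0 * y 0 + ν 1 * y 1 + ν 2 * y 2)]

lemma exp_skew_orth (A : Matrix (Fin 3) (Fin 3) ℝ) (hA : Aᵀ = -A) :
    (NormedSpace.exp A)ᵀ * NormedSpace.exp A = 1 := by
  rw [← Matrix.exp_transpose, hA,
    ← Matrix.exp_add_of_commute _ _ (Commute.neg_left (Commute.refl A)),
    neg_add_cancel, NormedSpace.exp_zero]

lemma hasDerivAt_exp_mulVec (K : Matrix (Fin 3) (Fin 3) ℝ) (x : Fin 3 → ℝ) (t : ℝ) :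
    HasDerivAt (fun u : ℝ => (WithLp.equiv 2 (Fin 3 → ℝ)).symm (NormedSpace.exp (u • K) *ᵥ x))
      ((WithLp.equiv 2 (Fin 3 → ℝ)).symm ((NormedSpace.exp (t • K) * K) *ᵥ x)) t := by
  letI : SeminormedRing (Matrix (Fin 3) (Fin 3) ℝ) := Matrix.linftyOpSemiNormedRing
  letI : NormedRing (Matrix (Fin 3) (Fin 3) ℝ) := Matrix.linftyOpNormedRing
  letI : NormedAlgebra ℝ (Matrix (Fin 3) (Fin 3) ℝ) := Matrix.linftyOpNormedAlgebra
  haveI : CompleteSpace (Matrix (Fin 3) (Fin 3) ℝ) := FiniteDimensional.complete ℝ _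
  have h := hasDerivAt_exp_smul_const (𝕂 := ℝ) K t
  let L : Matrix (Fin 3) (Fin 3) ℝ →ₗ[ℝ] EuclideanSpace ℝ (Fin 3) :=
    { toFun := fun A => (WithLp.equiv 2 (Fin 3 → ℝ)).symm (A *ᵥ x)
      map_add' := fun A B => by
        ext i; simp [Matrix.add_mulVec]
      map_smul' := fun c A => by
        ext i; simp [Matrix.smul_mulVec] }
  exact (L.toContinuousLinearMap.hasFDerivAt
    (x := NormedSpace.exp (t • K))).comp_hasDerivAt t h

lemma exp_skew_isometry (ν : Fin 3 → ℝ) (t : ℝ) (y : Fin 3 → ℝ) :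
    eunorm (NormedSpace.exp (t • skew ν) *ᵥ y) = eunorm y := by
  have hAT : (t • skew ν)ᵀ = -(t • skew ν) := by
    rw [Matrix.transpose_smul, skew_transpose, smul_neg]
  have horth := exp_skew_orth _ hAT
  rw [eunorm_eq_sqrt_dot, eunorm_eq_sqrt_dot]
  congr 1
  set R := NormedSpace.exp (t • skew ν)
  calc (R *ᵥ y) ⬝ᵥ (R *ᵥ y) = ((R *ᵥ y) ᵥ* R) ⬝ᵥ y := Matrix.dotProduct_mulVec _ _ _
    _ = ((y ᵥ* Rᵀ) ᵥ* R) ⬝ᵥ y := by rw [Matrix.vecMul_transpose]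
    _ = (y ᵥ* (Rᵀ * R)) ⬝ᵥ y := by rw [Matrix.vecMul_vecMul]
    _ = y ⬝ᵥ y := by rw [horth, Matrix.vecMul_one]

lemma eunorm_skew_mulVec_le (ν y : Fin 3 → ℝ) :
    eunorm (skew ν *ᵥ y) ≤ eunorm ν * eunorm y := by
  calc eunorm (skew ν *ᵥ y) = Real.sqrt ((skew ν *ᵥ y) ⬝ᵥ (skew ν *ᵥ y)) := eunorm_eq_sqrt_dot _
    _ ≤ Real.sqrt ((ν ⬝ᵥ ν) * (y ⬝ᵥ y)) := Real.sqrt_le_sqrt (skew_mulVec_dot ν y)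
    _ = eunorm ν * eunorm y := by
        rw [Real.sqrt_mul (dot_self_nonneg' ν), ← eunorm_eq_sqrt_dot, ← eunorm_eq_sqrt_dot]

lemma exp_skew_displacement (ν : Fin 3 → ℝ) (hν : eunorm ν = 1) (θ : ℝ) (hθ : 0 ≤ θ)
    (x : Fin 3 → ℝ) :
    eunorm (NormedSpace.exp (θ • skew ν) *ᵥ x - x) ≤ θ * eunorm x := by
  set K := skew ν with hK
  have bound : ∀ u ∈ Set.Ico (0:ℝ) θ,
      ‖(WithLp.equiv 2 (Fin 3 → ℝ)).symm ((NormedSpace.exp (u • K) * K) *ᵥ x)‖ ≤ eunorm x := by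
    intro u _
    rw [eunorm_withLp, ← Matrix.mulVec_mulVec, exp_skew_isometry]
    calc eunorm (K *ᵥ x) ≤ eunorm ν * eunorm x := eunorm_skew_mulVec_le ν x
      _ = eunorm x := by rw [hν, one_mul]
  have hf : ∀ u ∈ Set.Icc (0:ℝ) θ,
      HasDerivWithinAt
        (fun u : ℝ => (WithLp.equiv 2 (Fin 3 → ℝ)).symm (NormedSpace.exp (u • K) *ᵥ x))
        ((WithLp.equiv 2 (Fin 3 → ℝ)).symm ((NormedSpace.exp (u • K) * K) *ᵥ x))
        (Set.Icc 0 θ) u :=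
    fun u _ => (hasDerivAt_exp_mulVec K x u).hasDerivWithinAt
  have h := norm_image_sub_le_of_norm_deriv_le_segment' hf bound θ (Set.right_mem_Icc.mpr hθ)
  have hf0 : NormedSpace.exp ((0:ℝ) • K) *ᵥ x = x := by
    rw [zero_smul, NormedSpace.exp_zero, Matrix.one_mulVec]
  rw [hf0] at h
  have heq : (WithLp.equiv 2 (Fin 3 → ℝ)).symm (NormedSpace.exp (θ • K) *ᵥ x)
      - (WithLp.equiv 2 (Fin 3 → ℝ)).symm x
      = (WithLp.equiv 2 (Fin 3 → ℝ)).symm (NormedSpace.exp (θ • K) *ᵥ x - x) := by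
    ext i; rfl
  rw [heq, eunorm_withLp] at h
  calc eunorm (NormedSpace.exp (θ • K) *ᵥ x - x) ≤ eunorm x * (θ - 0) := h
    _ = θ * eunorm x := by ring

lemma rayleigh_bound {m : ℕ} [NeZero m] {H : Matrix (Fin m) (Fin m) ℝ} (hH : H.IsHermitian)
    (x : Fin m → ℝ) : x ⬝ᵥ (H *ᵥ x) ≤ (⨆ i, hH.eigenvalues i) * (x ⬝ᵥ x) := by
  have hbdd : BddAbove (Set.range hH.eigenvalues) := Set.Finite.bddAbove (Set.finite_range _)
  set U : Matrix (Fin m) (Fin m) ℝ := (hH.eigenvectorUnitary : Matrix (Fin m) (Fin m) ℝ) with hUdef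
  have hU : U * star U = 1 := Matrix.mem_unitaryGroup_iff.mp hH.eigenvectorUnitary.2
  have hsU : star U = Uᵀ := by
    ext i j; simp [Matrix.star_apply]
  set y := Uᵀ *ᵥ x with hy
  have hxx : x ⬝ᵥ x = y ⬝ᵥ y := by
    calc x ⬝ᵥ x = ((U * Uᵀ) *ᵥ x) ⬝ᵥ x := by rw [← hsU, hU, Matrix.one_mulVec]
      _ = (U *ᵥ (Uᵀ *ᵥ x)) ⬝ᵥ x := by rw [Matrix.mulVec_mulVec]
      _ = ((Uᵀ *ᵥ x) ᵥ* Uᵀ) ⬝ᵥ x := by rw [Matrix.vecMul_transpose]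
      _ = (Uᵀ *ᵥ x) ⬝ᵥ (Uᵀ *ᵥ x) := (Matrix.dotProduct_mulVec _ _ _).symm
  have hmain : x ⬝ᵥ (H *ᵥ x) = ∑ i, hH.eigenvalues i * (y i * y i) := by
    conv_lhs => rw [hH.spectral_theorem, Unitary.conjStarAlgAut_apply]
    rw [hsU, ← Matrix.mulVec_mulVec, ← Matrix.mulVec_mulVec, Matrix.dotProduct_mulVec,
      ← Matrix.mulVec_transpose, ← hy]
    simp only [dotProduct, Matrix.mulVec_diagonal, Function.comp_apply, RCLike.ofReal_real_eq_id,
      id_eq]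
    exact Finset.sum_congr rfl fun i _ => by ring
  rw [hmain, hxx]
  calc ∑ i, hH.eigenvalues i * (y i * y i)
      ≤ ∑ i, (⨆ j, hH.eigenvalues j) * (y i * y i) :=
        Finset.sum_le_sum fun i _ =>
          mul_le_mul_of_nonneg_right (le_ciSup hbdd i) (mul_self_nonneg _)
    _ = (⨆ j, hH.eigenvalues j) * (y ⬝ᵥ y) := by rw [← Finset.mul_sum]; rfl

theorem rotation_backoff_bound {n : ℕ} [NeZero n]
    (J : Matrix (Fin 3) (Fin n) ℝ) (S : Matrix (Fin n) (Fin n) ℝ)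
    (hS : S.PosSemidef) (hH : (J * S * Jᵀ).IsHermitian)
    (γ : Fin n → ℝ) (hγ : eunorm γ ≤ 1)
    (ν : Fin 3 → ℝ) (hν : eunorm ν = 1) (θ : ℝ) (hθ : 0 ≤ θ)
    (hθν : θ • ν = (J * hS.sqrt) *ᵥ γ)
    (γshp : Fin 3 → ℝ) :
    eunorm (NormedSpace.exp (θ • skew ν) *ᵥ γshp - γshp) ≤
      Real.sqrt (⨆ i, hH.eigenvalues i) * eunorm γshp := by
  set lam := ⨆ i, hH.eigenvalues i with hlam
  have hpsd : (J * S * Jᵀ).PosSemidef := by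
    have h := hS.mul_mul_conjTranspose_same J
    rwa [Matrix.conjTranspose_eq_transpose_of_trivial] at h
  have hlam0 : 0 ≤ lam := by
    refine le_trans (hpsd.eigenvalues_nonneg 0) ?_
    exact le_ciSup (Set.Finite.bddAbove (Set.finite_range _)) 0
  have key : θ ≤ Real.sqrt lam := by
    rcases eq_or_lt_of_le hθ with h0 | hpos
    · rw [← h0]; exact Real.sqrt_nonneg _
    · have hνν : ν ⬝ᵥ ν = 1 := by
        have h := eunorm_sq ν
        rw [hν] at h; simpa using h.symm
      set M := J * hS.sqrt with hM
      have hst : hS.sqrt ᵀ = hS.sqrt := by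
        have h : hS.sqrtᴴ = hS.sqrt := psd_sqrt_conjTranspose hS
        rwa [Matrix.conjTranspose_eq_transpose_of_trivial] at h
      have hMMt : M * Mᵀ = J * S * Jᵀ := by
        have hassoc : J * hS.sqrt * (hS.sqrt * Jᵀ) = J * (hS.sqrt * hS.sqrt) * Jᵀ := by
          simp only [Matrix.mul_assoc]
        rw [hM, Matrix.transpose_mul, hst, hassoc, psd_sqrt_mul_self hS]
      set w := θ • ν with hw
      have h1 : w ⬝ᵥ w = θ ^ 2 := by
        rw [hw, smul_dotProduct, dotProduct_smul, hνν]
        simp [pow_two]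
      have h2 : θ ^ 2 = (Mᵀ *ᵥ w) ⬝ᵥ γ := by
        calc θ ^ 2 = w ⬝ᵥ w := h1.symm
          _ = w ⬝ᵥ (M *ᵥ γ) := by rw [← hθν]
          _ = (w ᵥ* M) ⬝ᵥ γ := Matrix.dotProduct_mulVec _ _ _
          _ = (Mᵀ *ᵥ w) ⬝ᵥ γ := by rw [Matrix.mulVec_transpose]
      have h3 : θ ^ 2 ≤ eunorm (Mᵀ *ᵥ w) := by
        calc θ ^ 2 = (Mᵀ *ᵥ w) ⬝ᵥ γ := h2
          _ ≤ eunorm (Mᵀ *ᵥ w) * eunorm γ := dot_le_eunorm_mul _ _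
          _ ≤ eunorm (Mᵀ *ᵥ w) * 1 := by
              exact mul_le_mul_of_nonneg_left hγ (eunorm_nonneg _)
          _ = eunorm (Mᵀ *ᵥ w) := mul_one _
      have h4 : eunorm (Mᵀ *ᵥ w) ^ 2 = w ⬝ᵥ ((J * S * Jᵀ) *ᵥ w) := by
        rw [eunorm_sq]
        calc (Mᵀ *ᵥ w) ⬝ᵥ (Mᵀ *ᵥ w) = ((Mᵀ *ᵥ w) ᵥ* Mᵀ) ⬝ᵥ w := Matrix.dotProduct_mulVec _ _ _
          _ = (M *ᵥ (Mᵀ *ᵥ w)) ⬝ᵥ w := by rw [Matrix.vecMul_transpose]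
          _ = ((M * Mᵀ) *ᵥ w) ⬝ᵥ w := by rw [Matrix.mulVec_mulVec]
          _ = w ⬝ᵥ ((M * Mᵀ) *ᵥ w) := dotProduct_comm _ _
          _ = w ⬝ᵥ ((J * S * Jᵀ) *ᵥ w) := by rw [hMMt]
      have h5 : eunorm (Mᵀ *ᵥ w) ^ 2 ≤ lam * θ ^ 2 := by
        rw [h4]
        calc w ⬝ᵥ ((J * S * Jᵀ) *ᵥ w) ≤ lam * (w ⬝ᵥ w) := rayleigh_bound hH w
          _ = lam * θ ^ 2 := by rw [h1]
      have h6 : eunorm (Mᵀ *ᵥ w) ≤ Real.sqrt lam * θ := by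
        have h' := Real.sqrt_le_sqrt h5
        rwa [Real.sqrt_sq (eunorm_nonneg _), Real.sqrt_mul hlam0, Real.sqrt_sq hθ] at h'
      nlinarith [h3, h6, Real.sqrt_nonneg lam]
  calc eunorm (NormedSpace.exp (θ • skew ν) *ᵥ γshp - γshp) ≤ θ * eunorm γshp :=
      exp_skew_displacement ν hν θ hθ γshp
    _ ≤ Real.sqrt lam * eunorm γshp :=
      mul_le_mul_of_nonneg_right key (eunorm_nonneg _)
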